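/- Let z₁, z₂ ∈ ℂ with z₁ ≠ z₂ and x₁, x₂ ∈ ℝ, and set c₁(ζ) = z₁ + 2x₁ζ − z̄₁ζ², c₂(ζ) = z₂ + 2x₂ζ − z̄₂ζ². Let R = √((x₁−x₂)² + |z₁−z₂|²), ζ₁₂ = (x₁−x₂+R)/(z̄₁−z̄₂) and ζ₂₁ = (x₁−x₂−R)/(z̄₁−z̄₂). Then c₁(ζ₁₂) = c₂(ζ₁₂) and c₁(ζ₂₁) = c₂(ζ₂₁) (so ζ₁₂ and ζ₂₁ are the two intersection points of the quadratic polynomials c₁ and c₂), and ζ₁₂·conj(ζ₂₁) = −1, i.e. ζ₁₂ and ζ₂₁ are antipodal points on the Riemann sphere with respect to the real structure ζ ↦ −1/ζ̄. -/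

import Mathlib

/-- For two real centres `c₁(ζ) = z₁ + 2x₁ζ - z̄₁ζ²` and `c₂(ζ) = z₂ + 2x₂ζ - z̄₂ζ²` with
`z₁ ≠ z₂`, the points `ζ₁₂ = (x₁-x₂+R)/(z̄₁-z̄₂)` and `ζ₂₁ = (x₁-x₂-R)/(z̄₁-z̄₂)`, where
`R = √((x₁-x₂)² + |z₁-z₂|²)`, are intersection points of `c₁` and `c₂`, and they are
antipodal: `ζ₁₂ · conj ζ₂₁ = -1`. -/
theorem intersection_directions_antipodal (z₁ z₂ : ℂ) (hz : z₁ ≠ z₂) (x₁ x₂ : ℝ) :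
    let c₁ : ℂ → ℂ := fun ζ => z₁ + 2 * (x₁ : ℂ) * ζ - (starRingEnd ℂ) z₁ * ζ ^ 2
    let c₂ : ℂ → ℂ := fun ζ => z₂ + 2 * (x₂ : ℂ) * ζ - (starRingEnd ℂ) z₂ * ζ ^ 2
    let R : ℝ := Real.sqrt ((x₁ - x₂) ^ 2 + ‖z₁ - z₂‖ ^ 2)
    let ζ₁₂ : ℂ := ((x₁ : ℂ) - (x₂ : ℂ) + (R : ℂ)) / ((starRingEnd ℂ) z₁ - (starRingEnd ℂ) z₂)
    let ζ₂₁ : ℂ := ((x₁ : ℂ) - (x₂ : ℂ) - (R : ℂ)) / ((starRingEnd ℂ) z₁ - (starRingEnd ℂ) z₂)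
    c₁ ζ₁₂ = c₂ ζ₁₂ ∧ c₁ ζ₂₁ = c₂ ζ₂₁ ∧ ζ₁₂ * (starRingEnd ℂ) ζ₂₁ = -1 := by
  intro c₁ c₂ R ζ₁₂ ζ₂₁
  set a : ℂ := (starRingEnd ℂ) z₁ - (starRingEnd ℂ) z₂ with ha_def
  have ha : a ≠ 0 := by
    intro h
    apply hz
    have h' : (starRingEnd ℂ) z₁ = (starRingEnd ℂ) z₂ := by
      rw [ha_def] at h; linear_combination h
    exact (starRingEnd ℂ).injective h'
  have hzz : z₁ - z₂ ≠ 0 := sub_ne_zero.mpr hz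
  have hR2 : ((R : ℂ)) ^ 2 = ((x₁ : ℂ) - x₂) ^ 2 + (z₁ - z₂) * a := by
    have hnn : (0:ℝ) ≤ (x₁ - x₂) ^ 2 + ‖z₁ - z₂‖ ^ 2 := by positivity
    have h1 : (R:ℝ) ^ 2 = (x₁ - x₂) ^ 2 + ‖z₁ - z₂‖ ^ 2 :=
      Real.sq_sqrt hnn
    have h2 : (((‖z₁ - z₂‖ : ℝ)) : ℂ) ^ 2 = (z₁ - z₂) * a := by
      calc (((‖z₁ - z₂‖ : ℝ)) : ℂ) ^ 2
          = ((Complex.normSq (z₁ - z₂) : ℝ) : ℂ) := by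
            rw [← Complex.sq_norm]; push_cast; ring
        _ = (z₁ - z₂) * (starRingEnd ℂ) (z₁ - z₂) := (Complex.mul_conj _).symm
        _ = (z₁ - z₂) * a := by rw [map_sub, ha_def]
    have h3 := congrArg (fun t : ℝ => (t : ℂ)) h1
    push_cast at h3
    rw [h3, h2]
  have key : ∀ s ζ : ℂ, s ^ 2 = (R : ℂ) ^ 2 → ζ = ((x₁ : ℂ) - x₂ + s) / a →
      z₁ + 2 * (x₁ : ℂ) * ζ - (starRingEnd ℂ) z₁ * ζ ^ 2
        = z₂ + 2 * (x₂ : ℂ) * ζ - (starRingEnd ℂ) z₂ * ζ ^ 2 := by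
    intro s ζ hs hζ
    have hza : a * ζ = (x₁ : ℂ) - x₂ + s := by
      rw [hζ, mul_div_cancel₀ _ ha]
    have hcc : (starRingEnd ℂ) z₁ - (starRingEnd ℂ) z₂ = a := ha_def.symm
    apply mul_left_cancel₀ (pow_ne_zero 2 ha)
    linear_combination (a * (2 * ((x₁:ℂ) - x₂) - ((x₁:ℂ) - x₂ + s) - a * ζ)) * hza
      + (-a) * hs + (-a) * hR2 + (a ^ 2 * ζ ^ 2) * hcc
  refine ⟨key (R : ℂ) ζ₁₂ rfl rfl, key (-(R : ℂ)) ζ₂₁ (by ring)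
    (by show ζ₂₁ = _; rw [← sub_eq_add_neg]), ?_⟩
  show ζ₁₂ * (starRingEnd ℂ) ζ₂₁ = -1
  have hζ : (starRingEnd ℂ) ζ₂₁ = ((x₁ : ℂ) - x₂ - R) / (z₁ - z₂) := by
    show (starRingEnd ℂ) (_ / a) = _
    rw [map_div₀, map_sub, map_sub, Complex.conj_ofReal, Complex.conj_ofReal,
      Complex.conj_ofReal, ha_def, map_sub, Complex.conj_conj, Complex.conj_conj]
  rw [hζ]
  show (_ / a) * _ = _
  rw [div_mul_div_comm, div_eq_iff (mul_ne_zero ha hzz)]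
  linear_combination -hR2
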